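/- If (Q_1, …, Q_n) is a mixed-strategy Nash equilibrium of the MRF-induced game and Q = ∏_j Q_j, then for every player i ∈ V and every distribution Q'_i on A_i: KL(Q ∥ P) ≤ KL(Q'_i Q×_{-i} ∥ P) + ln|A_i|. -/

import Mathlib

open Finset

section KLAux

variable {V : Type*} [Fintype V] [DecidableEq V] {A : V → Type*} [∀ v, Fintype (A v)]

lemma sum_pi_prod (F : ∀ v, A v → ℝ) :
    ∑ x : ∀ v, A v, ∏ j, F j (x j) = ∏ j, ∑ a, F j a := by
  rw [Finset.prod_univ_sum, Fintype.piFinset_univ]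

lemma sum_prod_mul (F : ∀ v, A v → ℝ) (i : V) (g : A i → ℝ) :
    ∑ x : ∀ v, A v, (∏ j, F j (x j)) * g (x i)
      = (∑ a, F i a * g a) * ∏ j ∈ Finset.univ.erase i, (∑ a, F j a) := by
  have h : ∀ x : ∀ v, A v, (∏ j, F j (x j)) * g (x i)
      = ∏ j, Function.update F i (fun a => F i a * g a) j (x j) := by
    intro x
    rw [← Finset.mul_prod_erase univ (fun j => F j (x j)) (Finset.mem_univ i),
      ← Finset.mul_prod_erase univ (fun j => Function.update F i (fun a => F i a * g a) j (x j))
        (Finset.mem_univ i)]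
    rw [Function.update_self]
    have : ∏ j ∈ univ.erase i, Function.update F i (fun a => F i a * g a) j (x j)
        = ∏ j ∈ univ.erase i, F j (x j) :=
      Finset.prod_congr rfl fun j hj => by rw [Function.update_of_ne (Finset.ne_of_mem_erase hj)]
    rw [this]; ring
  rw [Finset.sum_congr rfl fun x _ => h x, sum_pi_prod,
    ← Finset.mul_prod_erase univ (fun j => ∑ a, Function.update F i (fun a => F i a * g a) j a)
      (Finset.mem_univ i), Function.update_self]
  congr 1
  exact Finset.prod_congr rfl fun j hj => by rw [Function.update_of_ne (Finset.ne_of_mem_erase hj)]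

lemma ent_fact (R : ∀ v, A v → ℝ) (h1 : ∀ v, ∑ a, R v a = 1) :
    ∑ x : ∀ v, A v, (∏ j, R j (x j)) * Real.log (∏ j, R j (x j))
      = ∑ k : V, ∑ a, R k a * Real.log (R k a) := by
  have hpt : ∀ x : ∀ v, A v, (∏ j, R j (x j)) * Real.log (∏ j, R j (x j))
      = ∑ k : V, (∏ j, R j (x j)) * Real.log (R k (x k)) := by
    intro x
    by_cases h : ∀ j, R j (x j) ≠ 0
    · rw [Real.log_prod (fun j _ => h j), Finset.mul_sum]
    · push_neg at h
      obtain ⟨j, hj⟩ := h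
      have hz : ∏ j, R j (x j) = 0 := Finset.prod_eq_zero (Finset.mem_univ j) hj
      simp [hz]
  rw [Finset.sum_congr rfl fun x _ => hpt x, Finset.sum_comm]
  refine Finset.sum_congr rfl fun k _ => ?_
  rw [sum_prod_mul R k (fun a => Real.log (R k a))]
  have : ∏ j ∈ univ.erase k, (∑ a, R j a) = 1 :=
    Finset.prod_eq_one fun j _ => h1 j
  rw [this, mul_one]

lemma sum_S_eq (Q : ∀ v, A v → ℝ) (i : V) (hQi : ∑ a : A i, Q i a = 1)
    (S : A i → ℝ) (f : (∀ v, A v) → ℝ) :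
    ∑ x : ∀ v, A v, (S (x i) * ∏ j ∈ Finset.univ.erase i, Q j (x j)) * f x
      = ∑ a : A i, S a * ∑ x : ∀ v, A v, (∏ j, Q j (x j)) * f (Function.update x i a) := by
  let e : (A i × ∀ v, A v) ≃ ((∀ v, A v) × A i) :=
    { toFun := fun p => (Function.update p.2 i p.1, p.2 i)
      invFun := fun p => (p.1 i, Function.update p.1 i p.2)
      left_inv := by
        intro p
        simp [Function.update_idem, Function.update_self, Function.update_eq_self]
      right_inv := by
        intro p
        simp [Function.update_idem, Function.update_self, Function.update_eq_self] }
  have hW : ∀ (x : ∀ v, A v) (a : A i),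
      ∏ j ∈ univ.erase i, Q j (Function.update x i a j) = ∏ j ∈ univ.erase i, Q j (x j) :=
    fun x a => Finset.prod_congr rfl fun j hj => by
      rw [Function.update_of_ne (Finset.ne_of_mem_erase hj)]
  calc ∑ x : ∀ v, A v, (S (x i) * ∏ j ∈ univ.erase i, Q j (x j)) * f x
      = ∑ p : (∀ v, A v) × A i,
          (S (p.1 i) * ∏ j ∈ univ.erase i, Q j (p.1 j)) * f p.1 * Q i p.2 := by
        rw [Fintype.sum_prod_type]
        refine Finset.sum_congr rfl fun x _ => ?_
        show _ = ∑ y : A i, (S (x i) * ∏ j ∈ univ.erase i, Q j (x j)) * f x * Q i y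
        rw [← Finset.mul_sum, hQi, mul_one]
    _ = ∑ p : A i × ∀ v, A v,
          S p.1 * ((∏ j, Q j (p.2 j)) * f (Function.update p.2 i p.1)) := by
        refine (Fintype.sum_equiv e _ _ fun p => ?_).symm
        show S p.1 * ((∏ j, Q j (p.2 j)) * f (Function.update p.2 i p.1))
          = (S (Function.update p.2 i p.1 i) *
              ∏ j ∈ univ.erase i, Q j (Function.update p.2 i p.1 j)) *
              f (Function.update p.2 i p.1) * Q i (p.2 i)
        rw [Function.update_self, hW, ← Finset.mul_prod_erase univ (fun j => Q j (p.2 j))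
          (Finset.mem_univ i)]
        ring
    _ = ∑ a : A i, S a * ∑ x : ∀ v, A v, (∏ j, Q j (x j)) * f (Function.update x i a) := by
        rw [Fintype.sum_prod_type]
        exact Finset.sum_congr rfl fun a _ => by rw [Finset.mul_sum]

lemma kl_decomp {ι : Type*} [Fintype ι] (R P Ψf : ι → ℝ) (Z : ℝ) (hZpos : 0 < Z)
    (hP : ∀ x, P x = Real.exp (Ψf x) / Z) (hR1 : ∑ x, R x = 1) :
    ∑ x, R x * Real.log (R x / P x)
      = (∑ x, R x * Real.log (R x)) - (∑ x, R x * Ψf x) + Real.log Z := by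
  have hpt : ∀ x, R x * Real.log (R x / P x)
      = R x * Real.log (R x) - R x * Ψf x + R x * Real.log Z := by
    intro x
    by_cases h : R x = 0
    · simp [h]
    · have hPx : P x = Real.exp (Ψf x) / Z := hP x
      have hlog : Real.log (R x / P x) = Real.log (R x) - (Ψf x - Real.log Z) := by
        rw [Real.log_div h (by rw [hPx]; positivity), hPx,
          Real.log_div (Real.exp_ne_zero _) (ne_of_gt hZpos), Real.log_exp]
      rw [hlog]; ring
  rw [Finset.sum_congr rfl fun x _ => hpt x, Finset.sum_add_distrib, Finset.sum_sub_distrib,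
    ← Finset.sum_mul, hR1, one_mul]

lemma sum_mul_log_nonpos {ι : Type*} [Fintype ι] (p : ι → ℝ)
    (h0 : ∀ a, 0 ≤ p a) (h1 : ∑ a, p a = 1) :
    ∑ a, p a * Real.log (p a) ≤ 0 := by
  refine Finset.sum_nonpos fun a _ => ?_
  have hle : p a ≤ 1 := by
    calc p a ≤ ∑ b, p b := Finset.single_le_sum (fun b _ => h0 b) (Finset.mem_univ a)
    _ = 1 := h1
  exact mul_nonpos_of_nonneg_of_nonpos (h0 a) (Real.log_nonpos (h0 a) hle)

lemma neg_log_card_le {ι : Type*} [Fintype ι] [Nonempty ι] (p : ι → ℝ)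
    (h0 : ∀ a, 0 ≤ p a) (h1 : ∑ a, p a = 1) :
    -Real.log (Fintype.card ι) ≤ ∑ a, p a * Real.log (p a) := by
  set n : ℝ := (Fintype.card ι : ℝ) with hn
  have hnpos : 0 < n := by
    rw [hn]; exact_mod_cast Fintype.card_pos
  have key : ∀ a, p a - 1 / n ≤ p a * Real.log n + p a * Real.log (p a) := by
    intro a
    rcases eq_or_lt_of_le (h0 a) with h | h
    · rw [← h]; simp; positivity
    · have hnp : 0 < n * p a := by positivity
      have hlog : 1 - 1 / (n * p a) ≤ Real.log (n * p a) := by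
        have := Real.log_le_sub_one_of_pos (x := 1 / (n * p a)) (by positivity)
        rw [Real.log_div one_ne_zero (ne_of_gt hnp), Real.log_one] at this
        linarith
      have hmul : p a * (1 - 1 / (n * p a)) ≤ p a * Real.log (n * p a) :=
        mul_le_mul_of_nonneg_left hlog (h0 a)
      have hsimp : p a * (1 - 1 / (n * p a)) = p a - 1 / n := by
        field_simp
      rw [Real.log_mul (ne_of_gt hnpos) (ne_of_gt h), mul_add] at hmul
      linarith [hsimp ▸ hmul]
  have hsum := Finset.sum_le_sum fun a (_ : a ∈ univ) => key a
  rw [Finset.sum_sub_distrib, Finset.sum_add_distrib, h1, ← Finset.sum_mul, h1, one_mul] at hsum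
  have hcard : ∑ _a : ι, (1 : ℝ) / n = 1 := by
    rw [Finset.sum_const, Finset.card_univ, nsmul_eq_mul, hn]
    field_simp
  rw [hcard] at hsum
  linarith

end KLAux

set_option maxHeartbeats 1000000 in
/-- If `(Q₁, …, Qₙ)` is a mixed-strategy Nash equilibrium of the
MRF-induced game and `Q = ∏ⱼ Qⱼ`, then for every player `i` and every distribution
`Q'i` on `A i`: `KL(Q ∥ P) ≤ KL(Q'i ⊗ Q×₋ᵢ ∥ P) + ln |A i|`. -/
theorem msne_kl_bound_log_card
    {V : Type*} [Fintype V] [DecidableEq V]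
    {A : V → Type*} [∀ v, Fintype (A v)] [∀ v, Nonempty (A v)]
    (𝒞 : Finset (Finset V))
    (φ : (C : Finset V) → ((j : {v // v ∈ C}) → A j.val) → ℝ)
    (Ψ : (∀ v, A v) → ℝ)
    (hΨ : ∀ x, Ψ x = ∑ C ∈ 𝒞, φ C (fun j => x j.val))
    (M : V → (∀ v, A v) → ℝ)
    (hM : ∀ i x, M i x = ∑ C ∈ 𝒞.filter (fun C => i ∈ C), φ C (fun j => x j.val))
    (Z : ℝ) (hZ : Z = ∑ x : ∀ v, A v, Real.exp (Ψ x))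
    (P : (∀ v, A v) → ℝ) (hP : ∀ x, P x = Real.exp (Ψ x) / Z)
    (Q : ∀ v, A v → ℝ)
    (hQ0 : ∀ v a, 0 ≤ Q v a) (hQ1 : ∀ v, ∑ a : A v, Q v a = 1)
    (hNE : ∀ (i : V) (x'i : A i),
      ∑ x : ∀ v, A v, (∏ j, Q j (x j)) * M i (Function.update x i x'i) ≤
        ∑ x : ∀ v, A v, (∏ j, Q j (x j)) * M i x) :
    ∀ (i : V) (Q'i : A i → ℝ), (∀ a, 0 ≤ Q'i a) → (∑ a : A i, Q'i a = 1) →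
      (∑ x : ∀ v, A v, (∏ j, Q j (x j)) * Real.log ((∏ j, Q j (x j)) / P x)) ≤
        (∑ x : ∀ v, A v,
            (Q'i (x i) * ∏ j ∈ Finset.univ.erase i, Q j (x j)) *
              Real.log ((Q'i (x i) * ∏ j ∈ Finset.univ.erase i, Q j (x j)) / P x)) +
          Real.log (Fintype.card (A i)) := by
  intro i Q'i hQ'0 hQ'1
  -- Z is positive
  have hZpos : 0 < Z := by
    rw [hZ]
    exact Finset.sum_pos (fun x _ => Real.exp_pos _) Finset.univ_nonempty
  -- the updated family
  set R' : ∀ v, A v → ℝ := Function.update Q i Q'i with hR'def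
  have hR'i : R' i = Q'i := Function.update_self i Q'i Q
  have hR'ne : ∀ j, j ≠ i → R' j = Q j := fun j hj => Function.update_of_ne hj Q'i Q
  have hR'1 : ∀ v, ∑ a, R' v a = 1 := by
    intro v
    by_cases hv : v = i
    · subst hv; rw [hR'i]; exact hQ'1
    · rw [hR'ne v hv]; exact hQ1 v
  have hR'0 : ∀ v a, 0 ≤ R' v a := by
    intro v a
    by_cases hv : v = i
    · subst hv; rw [hR'i]; exact hQ'0 a
    · rw [hR'ne v hv]; exact hQ0 v a
  -- the Q' density as a product
  have hdens : ∀ x : ∀ v, A v,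
      Q'i (x i) * ∏ j ∈ Finset.univ.erase i, Q j (x j) = ∏ j, R' j (x j) := by
    intro x
    rw [← Finset.mul_prod_erase univ (fun j => R' j (x j)) (Finset.mem_univ i), hR'i]
    congr 1
    exact Finset.prod_congr rfl fun j hj => by rw [hR'ne j (Finset.ne_of_mem_erase hj)]
  -- total masses
  have hQsum : ∑ x : ∀ v, A v, ∏ j, Q j (x j) = 1 := by
    rw [sum_pi_prod]; exact Finset.prod_eq_one fun j _ => hQ1 j
  have hR'sum : ∑ x : ∀ v, A v, ∏ j, R' j (x j) = 1 := by
    rw [sum_pi_prod]; exact Finset.prod_eq_one fun j _ => hR'1 j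
  -- KL decompositions
  have hKLQ : (∑ x : ∀ v, A v, (∏ j, Q j (x j)) * Real.log ((∏ j, Q j (x j)) / P x))
      = (∑ x : ∀ v, A v, (∏ j, Q j (x j)) * Real.log (∏ j, Q j (x j)))
        - (∑ x : ∀ v, A v, (∏ j, Q j (x j)) * Ψ x) + Real.log Z :=
    kl_decomp (fun x => ∏ j, Q j (x j)) P Ψ Z hZpos hP hQsum
  have hKLQ' : (∑ x : ∀ v, A v,
        (Q'i (x i) * ∏ j ∈ Finset.univ.erase i, Q j (x j)) *
          Real.log ((Q'i (x i) * ∏ j ∈ Finset.univ.erase i, Q j (x j)) / P x))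
      = (∑ x : ∀ v, A v, (∏ j, R' j (x j)) * Real.log (∏ j, R' j (x j)))
        - (∑ x : ∀ v, A v, (∏ j, R' j (x j)) * Ψ x) + Real.log Z := by
    simp only [hdens]
    exact kl_decomp (fun x => ∏ j, R' j (x j)) P Ψ Z hZpos hP hR'sum
  -- entropy factorizations
  have hEQ : ∑ x : ∀ v, A v, (∏ j, Q j (x j)) * Real.log (∏ j, Q j (x j))
      = ∑ k : V, ∑ a, Q k a * Real.log (Q k a) := ent_fact Q hQ1
  have hEQ' : ∑ x : ∀ v, A v, (∏ j, R' j (x j)) * Real.log (∏ j, R' j (x j))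
      = ∑ k : V, ∑ a, R' k a * Real.log (R' k a) := ent_fact R' hR'1
  -- entropy sums split at i
  have hEsplitQ : ∑ k : V, ∑ a, Q k a * Real.log (Q k a)
      = (∑ a, Q i a * Real.log (Q i a))
        + ∑ k ∈ univ.erase i, ∑ a, Q k a * Real.log (Q k a) :=
    (Finset.add_sum_erase univ (fun k => ∑ a, Q k a * Real.log (Q k a)) (Finset.mem_univ i)).symm
  have hEsplitQ' : ∑ k : V, ∑ a, R' k a * Real.log (R' k a)
      = (∑ a, Q'i a * Real.log (Q'i a))
        + ∑ k ∈ univ.erase i, ∑ a, Q k a * Real.log (Q k a) := by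
    rw [← Finset.add_sum_erase univ (fun k => ∑ a, R' k a * Real.log (R' k a))
      (Finset.mem_univ i), hR'i]
    congr 1
    exact Finset.sum_congr rfl fun k hk => by rw [hR'ne k (Finset.ne_of_mem_erase hk)]
  -- the residual potential
  set N : (∀ v, A v) → ℝ :=
    fun x => ∑ C ∈ 𝒞.filter (fun C => ¬ i ∈ C), φ C (fun j => x j.val) with hNdef
  have hΨsplit : ∀ x, Ψ x = M i x + N x := by
    intro x
    rw [hΨ, hM]
    exact (Finset.sum_filter_add_sum_filter_not 𝒞 (fun C => i ∈ C) _).symm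
  have hNinv : ∀ (x : ∀ v, A v) (a : A i), N (Function.update x i a) = N x := by
    intro x a
    refine Finset.sum_congr rfl fun C hC => ?_
    have hiC : i ∉ C := (Finset.mem_filter.mp hC).2
    congr 1
    funext j
    exact Function.update_of_ne (fun h => hiC (by rw [← h]; exact j.property)) a x
  -- energy comparisons
  have hMle : ∑ x : ∀ v, A v,
      (Q'i (x i) * ∏ j ∈ univ.erase i, Q j (x j)) * M i x
        ≤ ∑ x : ∀ v, A v, (∏ j, Q j (x j)) * M i x := by
    rw [sum_S_eq Q i (hQ1 i) Q'i (M i)]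
    calc ∑ a : A i, Q'i a * ∑ x : ∀ v, A v, (∏ j, Q j (x j)) * M i (Function.update x i a)
        ≤ ∑ a : A i, Q'i a * ∑ x : ∀ v, A v, (∏ j, Q j (x j)) * M i x :=
          Finset.sum_le_sum fun a _ => mul_le_mul_of_nonneg_left (hNE i a) (hQ'0 a)
      _ = ∑ x : ∀ v, A v, (∏ j, Q j (x j)) * M i x := by
          rw [← Finset.sum_mul, hQ'1, one_mul]
  have hNeq : ∑ x : ∀ v, A v,
      (Q'i (x i) * ∏ j ∈ univ.erase i, Q j (x j)) * N x
        = ∑ x : ∀ v, A v, (∏ j, Q j (x j)) * N x := by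
    rw [sum_S_eq Q i (hQ1 i) Q'i N]
    have : ∀ a : A i, (∑ x : ∀ v, A v, (∏ j, Q j (x j)) * N (Function.update x i a))
        = ∑ x : ∀ v, A v, (∏ j, Q j (x j)) * N x := by
      intro a
      exact Finset.sum_congr rfl fun x _ => by rw [hNinv x a]
    rw [Finset.sum_congr rfl fun a _ => by rw [this a], ← Finset.sum_mul, hQ'1, one_mul]
  -- energy splits
  have hEnQ : ∑ x : ∀ v, A v, (∏ j, Q j (x j)) * Ψ x
      = (∑ x : ∀ v, A v, (∏ j, Q j (x j)) * M i x)
        + ∑ x : ∀ v, A v, (∏ j, Q j (x j)) * N x := by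
    rw [← Finset.sum_add_distrib]
    exact Finset.sum_congr rfl fun x _ => by rw [hΨsplit x, mul_add]
  have hEnQ' : ∑ x : ∀ v, A v, (∏ j, R' j (x j)) * Ψ x
      = (∑ x : ∀ v, A v, (Q'i (x i) * ∏ j ∈ univ.erase i, Q j (x j)) * M i x)
        + ∑ x : ∀ v, A v, (Q'i (x i) * ∏ j ∈ univ.erase i, Q j (x j)) * N x := by
    rw [← Finset.sum_add_distrib]
    refine Finset.sum_congr rfl fun x _ => ?_
    rw [← hdens x, hΨsplit x, mul_add]
  -- entropy bounds
  have hent1 : ∑ a, Q i a * Real.log (Q i a) ≤ 0 :=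
    sum_mul_log_nonpos (Q i) (hQ0 i) (hQ1 i)
  have hent2 : -Real.log (Fintype.card (A i)) ≤ ∑ a, Q'i a * Real.log (Q'i a) :=
    neg_log_card_le Q'i hQ'0 hQ'1
  -- assemble
  rw [hKLQ, hKLQ', hEQ, hEQ', hEsplitQ, hEsplitQ', hEnQ, hEnQ']
  linarith [hMle, hNeq, hent1, hent2]
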